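/- Let N be a compact smooth manifold of dimension n, let j : N → ℂ^n be a totally real smooth embedding, and let ζ be a smooth nowhere-vanishing vector field on N. Then there exists ε₀ > 0 such that for every ε with 0 < ε < ε₀, the ℂ-normal pushoff j^♯_ζ : N → ℂ^n, a ↦ j(a) + ε·i·dj_a(ζ(a)), is a smooth embedding whose image is disjoint from j(N). -/

import Mathlib

open scoped Manifold
open Metric Module

noncomputable section

/-- `ℂⁿ`, identified with `EuclideanSpace ℂ (Fin n)`. -/
abbrev Cn (n : ℕ) : Type := EuclideanSpace ℂ (Fin n)

instance (n : ℕ) (x : Cn n) : SMul ℂ (TangentSpace 𝓘(ℝ, Cn n) x) :=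
  inferInstanceAs (SMul ℂ (Cn n))

section

variable (n : ℕ) {N : Type*} [TopologicalSpace N]
  [ChartedSpace (EuclideanSpace ℝ (Fin n)) N]

/-- A smooth embedding of an `n`-manifold `N` in `ℂⁿ`: smooth, injective, a topological
embedding, with injective differential at every point. -/
def IsSmoothEmbeddingOf (j : N → Cn n) : Prop :=
  ContMDiff (𝓡 n) 𝓘(ℝ, Cn n) (⊤ : ℕ∞) j ∧
  Function.Injective j ∧
  Topology.IsEmbedding j ∧
  ∀ a : N, Function.Injective (mfderiv (𝓡 n) 𝓘(ℝ, Cn n) j a)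

/-- The embedding `j` is totally real: at every point, the image of the tangent space
under `dj` contains no complex line, i.e. `dj(TₐN) ∩ i·dj(TₐN) = {0}`. -/
def IsTotallyRealOf (j : N → Cn n) : Prop :=
  ∀ a : N,
    Set.range (mfderiv (𝓡 n) 𝓘(ℝ, Cn n) j a) ∩
      ((fun v : Cn n => Complex.I • v) '' Set.range (mfderiv (𝓡 n) 𝓘(ℝ, Cn n) j a)) = {0}

/-- The `ℂ`-normal pushoff `a ↦ j(a) + ε·i·djₐ(ζ(a))` of `j` by the vector field `ζ`. -/
def cPushoff (j : N → Cn n) (ζ : ∀ a : N, TangentSpace (𝓡 n) a) (ε : ℝ) (a : N) : Cn n :=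
  let dv : Cn n := mfderiv (𝓡 n) 𝓘(ℝ, Cn n) j a (ζ a)
  j a + ε • Complex.I • dv

end


namespace TRproof
open Set Filter Topology Function
set_option maxHeartbeats 1000000


lemma local_analysis {E F : Type*} [NormedAddCommGroup E] [NormedSpace ℝ E]
    [FiniteDimensional ℝ E] [NormedAddCommGroup F] [NormedSpace ℝ F] [FiniteDimensional ℝ F]
    {Ω : Set E} (hΩ : IsOpen Ω) {x₀ : E} (hx₀ : x₀ ∈ Ω)
    {f u : E → F} (hf : ContDiffOn ℝ (⊤ : ℕ∞) f Ω) (hu : ContDiffOn ℝ (⊤ : ℕ∞) u Ω)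
    (ι : F →L[ℝ] F) (hι : ∀ v, ‖ι v‖ = ‖v‖)
    (hinj : Function.Injective (fderiv ℝ f x₀))
    (hnr : ι (u x₀) ∉ Set.range (fderiv ℝ f x₀)) :
    ∃ V ∈ 𝓝 x₀, ∃ ε₁ > (0 : ℝ), ∀ ε : ℝ, 0 < ε → ε < ε₁ → ∀ x ∈ V, ∀ y ∈ V,
      (f x + ε • ι (u x) = f y + ε • ι (u y) → x = y) ∧
      (f x + ε • ι (u x) ≠ f y) ∧
      Function.Injective (fderiv ℝ (fun z => f z + ε • ι (u z)) x) := by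
  classical
  have hfat : ∀ x ∈ Ω, ContDiffAt ℝ (⊤ : ℕ∞) f x := fun x hx => hf.contDiffAt (hΩ.mem_nhds hx)
  have huat : ∀ x ∈ Ω, ContDiffAt ℝ (⊤ : ℕ∞) u x := fun x hx => hu.contDiffAt (hΩ.mem_nhds hx)
  set D₀ := fderiv ℝ f x₀ with hD₀
  have hone : (1 : WithTop ℕ∞) ≤ ((⊤ : ℕ∞) : WithTop ℕ∞) := by
    exact_mod_cast (le_top : (1:ℕ∞) ≤ ⊤)
  have hstrict : HasStrictFDerivAt f D₀ x₀ := (hfat x₀ hx₀).hasStrictFDerivAt (by simp)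
  -- antilipschitz constant for D₀
  obtain ⟨K, hK0, hKa⟩ := (LinearMap.injective_iff_antilipschitz (D₀ : E →ₗ[ℝ] F)).mp hinj
  have hKR : (0:ℝ) < K := hK0
  set c : ℝ := 1 / (2 * K) with hc
  have hc0 : 0 < c := by rw [hc]; positivity
  have hD₀low : ∀ v : E, 2 * c * ‖v‖ ≤ ‖D₀ v‖ := by
    intro v
    have h1 : ‖v‖ ≤ K * ‖D₀ v‖ := by
      have := hKa.le_mul_dist v 0
      simpa [dist_eq_norm] using this
    have h2 : 2 * c = 1 / K := by rw [hc]; field_simp [hKR.ne']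
    rw [h2]
    rw [div_mul_eq_mul_div, one_mul, div_le_iff₀ hKR] at *
    linarith [h1]
  -- projection killing the range of D₀
  obtain ⟨Q, hQ⟩ := Submodule.exists_isCompl (LinearMap.range (D₀ : E →ₗ[ℝ] F))
  set π : F →L[ℝ] ↥Q :=
    LinearMap.toContinuousLinearMap (Q.projectionOnto (LinearMap.range (D₀ : E →ₗ[ℝ] F)) hQ.symm) with hπ
  have hπker : ∀ v : F, v ∈ LinearMap.range (D₀ : E →ₗ[ℝ] F) → π v = 0 := by
    intro v hv
    simpa [hπ] using Submodule.projectionOnto_apply_right hQ.symm ⟨v, hv⟩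
  have hπw : π (ι (u x₀)) ≠ 0 := by
    intro h
    apply hnr
    have : ι (u x₀) ∈ LinearMap.range (D₀ : E →ₗ[ℝ] F) := by
      have h2 := Submodule.ker_projectionOnto hQ.symm
      have : ι (u x₀) ∈ LinearMap.ker (Q.projectionOnto (LinearMap.range (D₀ : E →ₗ[ℝ] F)) hQ.symm) := by
        simpa [hπ] using h
      rwa [h2] at this
    simpa [LinearMap.mem_range] using this
  set ρ : ℝ := ‖π (ι (u x₀))‖ with hρ
  have hρ0 : 0 < ρ := by rw [hρ]; exact norm_pos_iff.mpr hπw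
  set Mu : ℝ := ‖u x₀‖ + 1 with hMu
  have hMu0 : 0 < Mu := by rw [hMu]; positivity
  set Mp : ℝ := ‖π‖ + 1 with hMp
  have hMp0 : 0 < Mp := by rw [hMp]; positivity
  have hπle : ∀ v : F, ‖π v‖ ≤ Mp * ‖v‖ := fun v =>
    le_trans (π.le_opNorm v) (by rw [hMp]; nlinarith [norm_nonneg v])
  set M' : ℝ := ‖fderiv ℝ u x₀‖ + 1 with hM'
  have hM'0 : 0 < M' := by rw [hM']; positivity
  set δ : ℝ := min (ρ * c / (4 * Mp * Mu)) c with hδ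
  have hδnum : 0 < ρ * c / (4 * Mp * Mu) :=
    div_pos (mul_pos hρ0 hc0) (by nlinarith)
  have hδ0 : 0 < δ := lt_min hδnum hc0
  -- eventual facts near x₀
  have e1 : ∀ᶠ x in 𝓝 x₀, x ∈ Ω := hΩ.eventually_mem hx₀
  have e2 : ∀ᶠ x in 𝓝 x₀, ‖u x - u x₀‖ < min 1 (ρ / (2 * Mp)) := by
    have hucont : ContinuousAt u x₀ := (huat x₀ hx₀).continuousAt
    have h1 : Tendsto (fun x => ‖u x - u x₀‖) (𝓝 x₀) (𝓝 0) := by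
      have h2 : Tendsto (fun x => ‖u x - u x₀‖) (𝓝 x₀) (𝓝 ‖u x₀ - u x₀‖) :=
        (hucont.sub (continuousAt_const (y := u x₀))).norm
      simpa using h2
    exact h1.eventually_lt_const (lt_min one_pos (div_pos hρ0 (by nlinarith)))
  have e3 : ∀ᶠ x in 𝓝 x₀, ‖fderiv ℝ u x‖ < M' := by
    have hu' : ContinuousOn (fderiv ℝ u) Ω := hu.continuousOn_fderiv_of_isOpen hΩ hone
    have h1 := (hu'.continuousAt (hΩ.mem_nhds hx₀)).norm
    exact h1.eventually_lt_const (by rw [hM']; exact lt_add_one _)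
  have e4 : ∀ᶠ x in 𝓝 x₀, ‖fderiv ℝ f x - D₀‖ < c := by
    have hf' : ContinuousOn (fderiv ℝ f) Ω := hf.continuousOn_fderiv_of_isOpen hΩ hone
    have h1 : Tendsto (fun x => ‖fderiv ℝ f x - D₀‖) (𝓝 x₀) (𝓝 0) := by
      have h2 : Tendsto (fun x => ‖fderiv ℝ f x - D₀‖) (𝓝 x₀) (𝓝 ‖D₀ - D₀‖) :=
        ((hf'.continuousAt (hΩ.mem_nhds hx₀)).sub (continuousAt_const (y := D₀))).norm
      simpa using h2
    exact h1.eventually_lt_const hc0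
  have hpair : ∀ᶠ p : E × E in 𝓝 (x₀, x₀),
      ‖f p.1 - f p.2 - D₀ (p.1 - p.2)‖ ≤ δ * ‖p.1 - p.2‖ :=
    hstrict.isLittleO.def hδ0
  obtain ⟨s₁, hs₁, s₂, hs₂, hsub⟩ := mem_nhds_prod_iff.mp hpair
  obtain ⟨L, t, ht, hLip⟩ := ((huat x₀ hx₀).of_le hone).exists_lipschitzOnWith
  set A : Set E := {x | x ∈ Ω ∧ ‖u x - u x₀‖ < min 1 (ρ / (2 * Mp)) ∧
      ‖fderiv ℝ u x‖ < M' ∧ ‖fderiv ℝ f x - D₀‖ < c} with hA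
  have hAmem : A ∈ 𝓝 x₀ := e1.and (e2.and (e3.and e4))
  set V : Set E := ((s₁ ∩ s₂) ∩ t) ∩ A with hVdef
  have hV : V ∈ 𝓝 x₀ := inter_mem (inter_mem (inter_mem hs₁ hs₂) ht) hAmem
  refine ⟨V, hV, min (c / ((L : ℝ) + 1)) (c / M'),
    lt_min (div_pos hc0 (by positivity)) (div_pos hc0 hM'0), ?_⟩
  intro ε hε0 hε1 x hx y hy
  -- unpack memberships
  have hxs₁ : x ∈ s₁ := hx.1.1.1
  have hxs₂ : x ∈ s₂ := hx.1.1.2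
  have hys₁ : y ∈ s₁ := hy.1.1.1
  have hys₂ : y ∈ s₂ := hy.1.1.2
  have hxt : x ∈ t := hx.1.2
  have hyt : y ∈ t := hy.1.2
  have hxΩ : x ∈ Ω := hx.2.1
  have hxu : ‖u x - u x₀‖ < min 1 (ρ / (2 * Mp)) := hx.2.2.1
  have hxu' : ‖fderiv ℝ u x‖ < M' := hx.2.2.2.1
  have hxf' : ‖fderiv ℝ f x - D₀‖ < c := hx.2.2.2.2
  -- antilipschitz estimate for f on V
  have hfanti : ∀ a ∈ V, ∀ b ∈ V, c * ‖a - b‖ ≤ ‖f a - f b‖ := by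
    intro a ha b hb
    have hst : ‖f a - f b - D₀ (a - b)‖ ≤ δ * ‖a - b‖ := by
      have h0 := hsub (show (a, b) ∈ s₁ ×ˢ s₂ from ⟨ha.1.1.1, hb.1.1.2⟩)
      simpa using h0
    have h1 := hD₀low (a - b)
    have hδc : δ ≤ c := min_le_right _ _
    have h2 : ‖D₀ (a - b)‖ ≤ ‖f a - f b‖ + ‖f a - f b - D₀ (a - b)‖ := by
      have h3 : D₀ (a - b) = (f a - f b) - ((f a - f b) - D₀ (a - b)) := by abel
      have h3' : ‖D₀ (a - b)‖ = ‖(f a - f b) - ((f a - f b) - D₀ (a - b))‖ := by rw [← h3]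
      rw [h3']; exact norm_sub_le _ _
    have h4 : δ * ‖a - b‖ ≤ c * ‖a - b‖ :=
      mul_le_mul_of_nonneg_right hδc (norm_nonneg _)
    linarith
  have hux : ‖u x‖ ≤ Mu := by
    have h1 : ‖u x‖ ≤ ‖u x₀‖ + ‖u x - u x₀‖ := by
      have h2 := norm_sub_norm_le (u x) (u x₀)
      linarith
    have h3 : ‖u x - u x₀‖ ≤ 1 := le_of_lt (lt_of_lt_of_le hxu (min_le_left _ _))
    rw [hMu]; linarith
  refine ⟨?_, ?_, ?_⟩
  · -- injectivity of the pushoff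
    intro heq
    by_contra hne
    have hxyn : 0 < ‖x - y‖ := norm_sub_pos_iff.mpr hne
    have h1 : f x - f y = ε • (ι (u y) - ι (u x)) := by
      have h2 : f x - f y = (f y + ε • ι (u y)) - ε • ι (u x) - f y := by rw [← heq]; abel
      rw [h2, smul_sub]; abel
    have h2 : ‖f x - f y‖ ≤ ε * ((L : ℝ) * ‖x - y‖) := by
      rw [h1, norm_smul, Real.norm_eq_abs, abs_of_pos hε0, ← map_sub, hι]
      have hle : ‖u y - u x‖ ≤ (L : ℝ) * ‖y - x‖ := by
        have h7 := hLip.dist_le_mul y hyt x hxt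
        simpa [dist_eq_norm] using h7
      rw [norm_sub_rev x y]
      exact mul_le_mul_of_nonneg_left hle hε0.le
    have h3 := hfanti x hx y hy
    have h4 : ε * ((L : ℝ) + 1) < c := by
      have h5 : ε < c / ((L : ℝ) + 1) := lt_of_lt_of_le hε1 (min_le_left _ _)
      have h6 : (0:ℝ) < (L : ℝ) + 1 := by positivity
      exact (lt_div_iff₀ h6).mp h5
    have hLc : ε * (L : ℝ) < c := by linarith
    have h14 : c * ‖x - y‖ ≤ (ε * (L : ℝ)) * ‖x - y‖ := by
      calc c * ‖x - y‖ ≤ ‖f x - f y‖ := h3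
        _ ≤ ε * ((L : ℝ) * ‖x - y‖) := h2
        _ = (ε * (L : ℝ)) * ‖x - y‖ := by ring
    have h15 := mul_lt_mul_of_pos_right hLc hxyn
    linarith
  · -- pushoff avoids the image of f
    intro hcontra
    have h1 : f y - f x = ε • ι (u x) := by rw [← hcontra]; abel
    have hstyx : ‖f y - f x - D₀ (y - x)‖ ≤ δ * ‖y - x‖ := by
      have h0 := hsub (show (y, x) ∈ s₁ ×ˢ s₂ from ⟨hys₁, hxs₂⟩)
      simpa using h0
    have hπfy : π (f y - f x) = π (f y - f x - D₀ (y - x)) := by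
      have h2 : π (D₀ (y - x)) = 0 := hπker _ (LinearMap.mem_range_self _ _)
      rw [map_sub π (f y - f x) (D₀ (y - x)), h2, sub_zero]
    have hub1 : ‖π (f y - f x)‖ ≤ Mp * (δ * ‖y - x‖) := by
      rw [hπfy]
      exact le_trans (hπle _) (mul_le_mul_of_nonneg_left hstyx hMp0.le)
    have hyx : ‖y - x‖ ≤ (1 / c) * ‖f y - f x‖ := by
      have h2 := hfanti y hy x hx
      rw [one_div, inv_mul_eq_div, le_div_iff₀ hc0]
      linarith
    have hufx : ‖f y - f x‖ = ε * ‖u x‖ := by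
      rw [h1, norm_smul, Real.norm_eq_abs, abs_of_pos hε0, hι]
    have hlow : ρ / 2 ≤ ‖π (ι (u x))‖ := by
      have hdiff : ‖π (ι (u x)) - π (ι (u x₀))‖ ≤ ρ / 2 := by
        have h2 : π (ι (u x)) - π (ι (u x₀)) = π (ι (u x - u x₀)) := by
          rw [← map_sub π, ← map_sub ι]
        rw [h2]
        calc ‖π (ι (u x - u x₀))‖ ≤ Mp * ‖ι (u x - u x₀)‖ := hπle _
          _ = Mp * ‖u x - u x₀‖ := by rw [hι]
          _ ≤ Mp * (ρ / (2 * Mp)) := by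
              apply mul_le_mul_of_nonneg_left _ hMp0.le
              exact le_of_lt (lt_of_lt_of_le hxu (min_le_right _ _))
          _ = ρ / 2 := by field_simp [hMp0.ne']
      have h3 : ‖π (ι (u x₀))‖ - ‖π (ι (u x))‖ ≤ ‖π (ι (u x)) - π (ι (u x₀))‖ := by
        rw [norm_sub_rev]; exact norm_sub_norm_le _ _
      rw [← hρ] at h3
      linarith
    have hπsmul : π (f y - f x) = ε • π (ι (u x)) := by rw [h1, map_smul]
    have hfinal1 : ε * (ρ / 2) ≤ ‖π (f y - f x)‖ := by
      rw [hπsmul, norm_smul, Real.norm_eq_abs, abs_of_pos hε0]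
      exact mul_le_mul_of_nonneg_left hlow hε0.le
    have hyxbound : ‖y - x‖ ≤ (1 / c) * (ε * Mu) := by
      refine le_trans hyx ?_
      rw [hufx]
      have : ε * ‖u x‖ ≤ ε * Mu := mul_le_mul_of_nonneg_left hux hε0.le
      exact mul_le_mul_of_nonneg_left this (by positivity)
    have hδle : δ ≤ ρ * c / (4 * Mp * Mu) := min_le_left _ _
    have key : ‖π (f y - f x)‖ ≤ ε * (ρ / 4) := by
      calc ‖π (f y - f x)‖ ≤ Mp * (δ * ‖y - x‖) := hub1
        _ ≤ Mp * ((ρ * c / (4 * Mp * Mu)) * ((1 / c) * (ε * Mu))) := by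
            apply mul_le_mul_of_nonneg_left _ hMp0.le
            exact mul_le_mul hδle hyxbound (norm_nonneg _) hδnum.le
        _ = ε * (ρ / 4) := by
            field_simp [hc0.ne', hMp0.ne', hMu0.ne']
    have h16 : ε * (ρ / 4) < ε * (ρ / 2) := by
      apply mul_lt_mul_of_pos_left _ hε0
      linarith
    linarith
  · -- injectivity of the differential of the pushoff
    have hfd : HasFDerivAt f (fderiv ℝ f x) x :=
      ((hfat x hxΩ).differentiableAt (by simp)).hasFDerivAt
    have hud : HasFDerivAt u (fderiv ℝ u x) x :=
      ((huat x hxΩ).differentiableAt (by simp)).hasFDerivAt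
    have hhd : HasFDerivAt (fun z => f z + ε • ι (u z))
        (fderiv ℝ f x + ε • (ι.comp (fderiv ℝ u x))) x := by
      have h2 : HasFDerivAt (fun z => ι (u z)) (ι.comp (fderiv ℝ u x)) x :=
        ι.hasFDerivAt.comp x hud
      exact hfd.add (h2.const_smul ε)
    rw [hhd.fderiv]
    have hDx : ∀ z : E, c * ‖z‖ ≤ ‖fderiv ℝ f x z‖ := by
      intro z
      have h4 : ‖fderiv ℝ f x z - D₀ z‖ ≤ c * ‖z‖ := by
        have h5 := (fderiv ℝ f x - D₀).le_opNorm z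
        have h6 : ‖fderiv ℝ f x - D₀‖ * ‖z‖ ≤ c * ‖z‖ :=
          mul_le_mul_of_nonneg_right hxf'.le (norm_nonneg _)
        simpa using le_trans h5 h6
      have h6 := hD₀low z
      have h7 : ‖D₀ z‖ - ‖fderiv ℝ f x z‖ ≤ ‖fderiv ℝ f x z - D₀ z‖ := by
        rw [norm_sub_rev]; exact norm_sub_norm_le _ _
      linarith
    intro v w hvw
    by_contra hne
    have hvwn : 0 < ‖v - w‖ := norm_sub_pos_iff.mpr hne
    have hzero : fderiv ℝ f x (v - w) = -(ε • ι (fderiv ℝ u x (v - w))) := by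
      have h8 : (fderiv ℝ f x + ε • ι.comp (fderiv ℝ u x)) (v - w) = 0 := by
        rw [map_sub _ v w, hvw, sub_self]
      simp only [ContinuousLinearMap.add_apply, ContinuousLinearMap.smul_apply,
        ContinuousLinearMap.comp_apply] at h8
      exact eq_neg_of_add_eq_zero_left h8
    have h9 : ‖fderiv ℝ f x (v - w)‖ ≤ ε * (M' * ‖v - w‖) := by
      rw [hzero, norm_neg, norm_smul, Real.norm_eq_abs, abs_of_pos hε0, hι]
      have := (fderiv ℝ u x).le_opNorm (v - w)
      have h10 : ‖fderiv ℝ u x‖ * ‖v - w‖ ≤ M' * ‖v - w‖ :=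
        mul_le_mul_of_nonneg_right hxu'.le (norm_nonneg _)
      exact mul_le_mul_of_nonneg_left (le_trans this h10) hε0.le
    have h11 := hDx (v - w)
    have h12 : ε * M' < c := by
      have h13 : ε < c / M' := lt_of_lt_of_le hε1 (min_le_right _ _)
      exact (lt_div_iff₀ hM'0).mp h13
    have h15 : c * ‖v - w‖ ≤ (ε * M') * ‖v - w‖ := by
      calc c * ‖v - w‖ ≤ ‖fderiv ℝ f x (v - w)‖ := h11
        _ ≤ ε * (M' * ‖v - w‖) := h9
        _ = (ε * M') * ‖v - w‖ := by ring
    have h16 := mul_lt_mul_of_pos_right h12 hvwn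
    linarith


lemma snd_smooth {F : Type*} [NormedAddCommGroup F] [NormedSpace ℝ F] :
    ContMDiff 𝓘(ℝ, F).tangent 𝓘(ℝ, F) (⊤ : ℕ∞) (fun p : TangentBundle 𝓘(ℝ, F) F => (p.2 : F)) := by
  refine contMDiff_iff.2 ⟨continuous_snd.comp (tangentBundleModelSpaceHomeomorph 𝓘(ℝ, F)).continuous, ?_⟩
  intro x y
  simp only [mfld_simps]
  exact contDiff_snd.contDiffOn

def iotaC (n : ℕ) : Cn n →L[ℝ] Cn n :=
  ContinuousLinearMap.restrictScalars ℝ (Complex.I • ContinuousLinearMap.id ℂ (Cn n))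

lemma iotaC_apply (n : ℕ) (v : Cn n) : iotaC n v = Complex.I • v := rfl

lemma iotaC_norm (n : ℕ) (v : Cn n) : ‖iotaC n v‖ = ‖v‖ := by
  rw [iotaC_apply, norm_smul, Complex.norm_I, one_mul]

variable (n : ℕ) {N : Type*} [TopologicalSpace N]
  [ChartedSpace (EuclideanSpace ℝ (Fin n)) N] [IsManifold (𝓡 n) (⊤ : ℕ∞) N]

lemma written_contMDiffOn (F : N → Cn n) (hF : ContMDiff (𝓡 n) 𝓘(ℝ, Cn n) (⊤ : ℕ∞) F) (a₀ : N) :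
    ContMDiffOn 𝓘(ℝ, EuclideanSpace ℝ (Fin n)) 𝓘(ℝ, Cn n) (⊤ : ℕ∞)
      (F ∘ (extChartAt (𝓡 n) a₀).symm) (extChartAt (𝓡 n) a₀).target :=
  (hF.contMDiffOn).comp (contMDiffOn_extChartAt_symm a₀) (Set.subset_preimage_univ)

lemma written_contDiffOn (F : N → Cn n) (hF : ContMDiff (𝓡 n) 𝓘(ℝ, Cn n) (⊤ : ℕ∞) F) (a₀ : N) :
    ContDiffOn ℝ (⊤ : ℕ∞) (F ∘ (extChartAt (𝓡 n) a₀).symm) (extChartAt (𝓡 n) a₀).target :=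
  contMDiffOn_iff_contDiffOn.mp (written_contMDiffOn n F hF a₀)

lemma mfderiv_factor (F : N → Cn n) (hF : ContMDiff (𝓡 n) 𝓘(ℝ, Cn n) (⊤ : ℕ∞) F) (a₀ : N) (a : N)
    (ha : a ∈ (chartAt (EuclideanSpace ℝ (Fin n)) a₀).source) :
    mfderiv (𝓡 n) 𝓘(ℝ, Cn n) F a =
      (fderiv ℝ (F ∘ (extChartAt (𝓡 n) a₀).symm) (extChartAt (𝓡 n) a₀ a)).comp
        (mfderiv (𝓡 n) (𝓡 n) (chartAt (EuclideanSpace ℝ (Fin n)) a₀) a) := by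
  have hsrc : (chartAt (EuclideanSpace ℝ (Fin n)) a₀).source ∈ nhds a :=
    (chartAt _ a₀).open_source.mem_nhds ha
  have heq : F =ᶠ[nhds a] (F ∘ (extChartAt (𝓡 n) a₀).symm) ∘ (extChartAt (𝓡 n) a₀) := by
    filter_upwards [hsrc] with p hp
    have h : (extChartAt (𝓡 n) a₀).symm (extChartAt (𝓡 n) a₀ p) = p :=
      (extChartAt (𝓡 n) a₀).left_inv (by simpa using hp)
    show F p = F ((extChartAt (𝓡 n) a₀).symm (extChartAt (𝓡 n) a₀ p))
    exact (congrArg F h).symm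
  have hmem : extChartAt (𝓡 n) a₀ a ∈ (extChartAt (𝓡 n) a₀).target :=
    (extChartAt (𝓡 n) a₀).map_source (by simpa using ha)
  have hopen : IsOpen (extChartAt (𝓡 n) a₀).target := isOpen_extChartAt_target a₀
  have hdiff1 : MDifferentiableAt 𝓘(ℝ, EuclideanSpace ℝ (Fin n)) 𝓘(ℝ, Cn n)
      (F ∘ (extChartAt (𝓡 n) a₀).symm) (extChartAt (𝓡 n) a₀ a) :=
    ((written_contMDiffOn n F hF a₀).contMDiffAt (hopen.mem_nhds hmem)).mdifferentiableAt (by simp)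
  have hφ : HasMFDerivAt (𝓡 n) 𝓘(ℝ, EuclideanSpace ℝ (Fin n)) (extChartAt (𝓡 n) a₀) a
      (mfderiv (𝓡 n) (𝓡 n) (chartAt (EuclideanSpace ℝ (Fin n)) a₀) a) :=
    hasMFDerivAt_extChartAt ha
  refine heq.mfderiv_eq.trans ?_
  rw [mfderiv_comp a hdiff1 hφ.mdifferentiableAt, hφ.mfderiv, mfderiv_eq_fderiv]
  rfl

end TRproof

/-- If `N` is a compact smooth `n`-manifold, `j : N → ℂⁿ` a totally real smooth
embedding and `ζ` a smooth nowhere-vanishing vector field on `N`, then for all sufficiently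
small `ε > 0` the `ℂ`-normal pushoff `a ↦ j(a) + ε·i·djₐ(ζ(a))` is a smooth embedding whose
image is disjoint from `j(N)`. -/
theorem cPushoff_isSmoothEmbedding (n : ℕ) {N : Type*} [TopologicalSpace N]
    [ChartedSpace (EuclideanSpace ℝ (Fin n)) N] [IsManifold (𝓡 n) (⊤ : ℕ∞) N]
    [CompactSpace N]
    (j : N → Cn n) (hj : IsSmoothEmbeddingOf n j) (htr : IsTotallyRealOf n j)
    (ζ : ∀ a : N, TangentSpace (𝓡 n) a)
    (hζsmooth : ContMDiff (𝓡 n) (𝓡 n).tangent (⊤ : ℕ∞)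
      fun a => (⟨a, ζ a⟩ : TangentBundle (𝓡 n) N))
    (hζne : ∀ a : N, ζ a ≠ 0) :
    ∃ ε₀ > (0 : ℝ), ∀ ε : ℝ, 0 < ε → ε < ε₀ →
      IsSmoothEmbeddingOf n (cPushoff n j ζ ε) ∧
      Disjoint (Set.range (cPushoff n j ζ ε)) (Set.range j) := by
  classical
  obtain ⟨hjsm, hjinj, hjemb, hjdinj⟩ := hj
  rcases isEmpty_or_nonempty N with hN | hN
  · haveI : Subsingleton N := ⟨fun a => isEmptyElim a⟩
    refine ⟨1, one_pos, fun ε hε0 hε1 => ?_⟩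
    refine ⟨⟨fun a => isEmptyElim a, fun a => isEmptyElim a,
      Topology.IsEmbedding.of_subsingleton _, fun a => isEmptyElim a⟩, ?_⟩
    rw [Set.range_eq_empty (cPushoff n j ζ ε)]
    exact Set.empty_disjoint _
  -- the derivative field
  set g : N → Cn n := fun a => (mfderiv (𝓡 n) 𝓘(ℝ, Cn n) j a (ζ a) : Cn n) with hgdef
  have hgsm : ContMDiff (𝓡 n) 𝓘(ℝ, Cn n) (⊤ : ℕ∞) g := by
    have h1 := (hjsm.contMDiff_tangentMap (m := ((⊤ : ℕ∞) : WithTop ℕ∞)) (by simp)).comp hζsmooth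
    exact TRproof.snd_smooth.comp h1
  have hpush_eq : ∀ ε : ℝ, cPushoff n j ζ ε = fun a => j a + (ε • TRproof.iotaC n) (g a) :=
    fun ε => rfl
  have hpushsm : ∀ ε : ℝ, ContMDiff (𝓡 n) 𝓘(ℝ, Cn n) (⊤ : ℕ∞) (cPushoff n j ζ ε) := by
    intro ε
    rw [hpush_eq]
    exact hjsm.add ((ε • TRproof.iotaC n).contMDiff.comp hgsm)
  have hgcont : Continuous g := hgsm.continuous
  have hgne : ∀ a, g a ≠ 0 := by
    intro a h
    apply hζne a
    apply hjdinj a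
    rw [map_zero]
    exact h
  -- local data at every point
  have key : ∀ a₀ : N, ∃ U : Set N, IsOpen U ∧ a₀ ∈ U ∧ ∃ ε₁ > (0:ℝ), ∀ ε : ℝ, 0 < ε → ε < ε₁ →
      ∀ p ∈ U, ∀ q ∈ U,
        (cPushoff n j ζ ε p = cPushoff n j ζ ε q → p = q) ∧
        (cPushoff n j ζ ε p ≠ j q) ∧
        Function.Injective (mfderiv (𝓡 n) 𝓘(ℝ, Cn n) (cPushoff n j ζ ε) p) := by
    intro a₀
    have hsrc : a₀ ∈ (chartAt (EuclideanSpace ℝ (Fin n)) a₀).source := mem_chart_source _ a₀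
    have hfC : ContDiffOn ℝ (⊤ : ℕ∞) (j ∘ (extChartAt (𝓡 n) a₀).symm)
        (extChartAt (𝓡 n) a₀).target := TRproof.written_contDiffOn n j hjsm a₀
    have huC : ContDiffOn ℝ (⊤ : ℕ∞) (g ∘ (extChartAt (𝓡 n) a₀).symm)
        (extChartAt (𝓡 n) a₀).target := TRproof.written_contDiffOn n g hgsm a₀
    have hx₀ : extChartAt (𝓡 n) a₀ a₀ ∈ (extChartAt (𝓡 n) a₀).target :=
      mem_extChartAt_target a₀
    have hfac := TRproof.mfderiv_factor n j hjsm a₀ a₀ hsrc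
    have hTbij := (mdifferentiable_chart (I := 𝓡 n) a₀).mfderiv_bijective hsrc
    have hDinj : Function.Injective
        (fderiv ℝ (j ∘ (extChartAt (𝓡 n) a₀).symm) (extChartAt (𝓡 n) a₀ a₀)) := by
      intro v w hvw
      obtain ⟨v', rfl⟩ := hTbij.2 v
      obtain ⟨w', rfl⟩ := hTbij.2 w
      have h1 : mfderiv (𝓡 n) 𝓘(ℝ, Cn n) j a₀ v' = mfderiv (𝓡 n) 𝓘(ℝ, Cn n) j a₀ w' := by
        rw [hfac]
        exact hvw
      exact congrArg _ (hjdinj a₀ h1)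
    have hrange : Set.range (fderiv ℝ (j ∘ (extChartAt (𝓡 n) a₀).symm) (extChartAt (𝓡 n) a₀ a₀))
        = Set.range (mfderiv (𝓡 n) 𝓘(ℝ, Cn n) j a₀) := by
      rw [hfac]
      ext w
      constructor
      · rintro ⟨v, rfl⟩
        obtain ⟨v', hv'⟩ := hTbij.2 v
        exact ⟨v', by show (fderiv ℝ (j ∘ (extChartAt (𝓡 n) a₀).symm)
          (extChartAt (𝓡 n) a₀ a₀)) (mfderiv (𝓡 n) (𝓡 n)
          (chartAt (EuclideanSpace ℝ (Fin n)) a₀) a₀ v') = _; rw [hv']⟩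
      · rintro ⟨v, rfl⟩
        exact ⟨mfderiv (𝓡 n) (𝓡 n) (chartAt (EuclideanSpace ℝ (Fin n)) a₀) a₀ v, rfl⟩
    have hua₀ : (g ∘ (extChartAt (𝓡 n) a₀).symm) (extChartAt (𝓡 n) a₀ a₀) = g a₀ := by
      show g ((extChartAt (𝓡 n) a₀).symm (extChartAt (𝓡 n) a₀ a₀)) = g a₀
      rw [extChartAt_to_inv]
    have hnr : TRproof.iotaC n ((g ∘ (extChartAt (𝓡 n) a₀).symm) (extChartAt (𝓡 n) a₀ a₀)) ∉
        Set.range (fderiv ℝ (j ∘ (extChartAt (𝓡 n) a₀).symm) (extChartAt (𝓡 n) a₀ a₀)) := by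
      rw [hua₀, hrange]
      intro hmem
      have h2 : TRproof.iotaC n (g a₀) ∈
          Set.range (mfderiv (𝓡 n) 𝓘(ℝ, Cn n) j a₀) ∩
          ((fun v : Cn n => Complex.I • v) ''
            Set.range (mfderiv (𝓡 n) 𝓘(ℝ, Cn n) j a₀)) := by
        refine ⟨hmem, ⟨g a₀, ⟨ζ a₀, rfl⟩, ?_⟩⟩
        rw [TRproof.iotaC_apply]
      rw [htr a₀] at h2
      have h3 : Complex.I • g a₀ = 0 := by
        rw [← TRproof.iotaC_apply n (g a₀)]
        exact h2
      exact hgne a₀ ((smul_eq_zero.mp h3).resolve_left Complex.I_ne_zero)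
    obtain ⟨V, hV, ε₁, hε₁0, hlocan⟩ := TRproof.local_analysis
      (isOpen_extChartAt_target a₀) hx₀ hfC huC (TRproof.iotaC n) (TRproof.iotaC_norm n)
      hDinj hnr
    obtain ⟨V', hV'sub, hV'open, hx₀V'⟩ := _root_.mem_nhds_iff.mp hV
    refine ⟨(chartAt (EuclideanSpace ℝ (Fin n)) a₀).source ∩ extChartAt (𝓡 n) a₀ ⁻¹' V',
      isOpen_extChartAt_preimage a₀ hV'open, ⟨hsrc, hx₀V'⟩, ε₁, hε₁0, ?_⟩
    intro ε hε0 hεlt p hp q hq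
    have hpx : (extChartAt (𝓡 n) a₀).symm (extChartAt (𝓡 n) a₀ p) = p :=
      (extChartAt (𝓡 n) a₀).left_inv (by simpa using hp.1)
    have hqx : (extChartAt (𝓡 n) a₀).symm (extChartAt (𝓡 n) a₀ q) = q :=
      (extChartAt (𝓡 n) a₀).left_inv (by simpa using hq.1)
    have hpV : extChartAt (𝓡 n) a₀ p ∈ V := hV'sub hp.2
    have hqV : extChartAt (𝓡 n) a₀ q ∈ V := hV'sub hq.2
    have hval : ∀ r : N, (extChartAt (𝓡 n) a₀).symm (extChartAt (𝓡 n) a₀ r) = r →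
        cPushoff n j ζ ε r =
          (j ∘ (extChartAt (𝓡 n) a₀).symm) (extChartAt (𝓡 n) a₀ r) +
            ε • TRproof.iotaC n
              ((g ∘ (extChartAt (𝓡 n) a₀).symm) (extChartAt (𝓡 n) a₀ r)) := by
      intro r hr
      show cPushoff n j ζ ε r = j ((extChartAt (𝓡 n) a₀).symm (extChartAt (𝓡 n) a₀ r)) +
        ε • TRproof.iotaC n (g ((extChartAt (𝓡 n) a₀).symm (extChartAt (𝓡 n) a₀ r)))
      rw [hr]
      rfl
    obtain ⟨hA, hB, hC⟩ := hlocan ε hε0 hεlt (extChartAt (𝓡 n) a₀ p) hpV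
      (extChartAt (𝓡 n) a₀ q) hqV
    refine ⟨?_, ?_, ?_⟩
    · intro heq
      have h5 := hA (by rw [← hval p hpx, ← hval q hqx]; exact heq)
      rw [← hpx, ← hqx, h5]
    · intro heq
      apply hB
      have hfq : (j ∘ (extChartAt (𝓡 n) a₀).symm) (extChartAt (𝓡 n) a₀ q) = j q := by
        show j ((extChartAt (𝓡 n) a₀).symm (extChartAt (𝓡 n) a₀ q)) = j q
        rw [hqx]
      rw [← hval p hpx, heq, ← hfq]
    · have hfac2 := TRproof.mfderiv_factor n (cPushoff n j ζ ε) (hpushsm ε) a₀ p hp.1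
      have hcompeq : (cPushoff n j ζ ε) ∘ (extChartAt (𝓡 n) a₀).symm =
          fun z => (j ∘ (extChartAt (𝓡 n) a₀).symm) z +
            ε • TRproof.iotaC n ((g ∘ (extChartAt (𝓡 n) a₀).symm) z) := rfl
      rw [hfac2]
      intro v w hvw
      apply (mdifferentiable_chart (I := 𝓡 n) a₀).mfderiv_injective hp.1
      apply hC
      rw [← hcompeq]
      exact hvw
  choose U hUopen hUmem ε₁ hε₁pos hloc using key
  obtain ⟨t, ht⟩ := isCompact_univ.elim_finite_subcover U hUopen
    (fun a _ => Set.mem_iUnion.mpr ⟨a, hUmem a⟩)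
  have htne : t.Nonempty := by
    obtain ⟨a⟩ := hN
    obtain ⟨i, hit, _⟩ := Set.mem_iUnion₂.mp (ht (Set.mem_univ a))
    exact ⟨i, hit⟩
  obtain ⟨Mg₀, hMg₀⟩ := isCompact_univ.exists_bound_of_continuousOn hgcont.continuousOn
  set MG : ℝ := max Mg₀ 0 with hMGdef
  have hMG : ∀ a, ‖g a‖ ≤ MG := fun a => le_trans (hMg₀ a (Set.mem_univ a)) (le_max_left _ _)
  have hMG0 : 0 ≤ MG := le_max_right _ _
  set S : Set (N × N) := ⋃ i ∈ t, U i ×ˢ U i with hS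
  have hSopen : IsOpen S := isOpen_biUnion (fun i _ => (hUopen i).prod (hUopen i))
  have hKcomp : IsCompact Sᶜ := hSopen.isClosed_compl.isCompact
  have hKne_diag : ∀ p : N × N, p ∈ Sᶜ → p.1 ≠ p.2 := by
    intro p hp hp12
    apply hp
    obtain ⟨i, hit, hi⟩ := Set.mem_iUnion₂.mp (ht (Set.mem_univ p.1))
    exact Set.mem_biUnion hit ⟨hi, by rw [← hp12]; exact hi⟩
  have hcont2 : Continuous (fun p : N × N => ‖j p.1 - j p.2‖) :=
    ((hjsm.continuous.comp continuous_fst).sub (hjsm.continuous.comp continuous_snd)).norm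
  obtain ⟨d, hd0, hd⟩ : ∃ d > (0:ℝ), ∀ p ∈ Sᶜ, d ≤ ‖j p.1 - j p.2‖ := by
    rcases Set.eq_empty_or_nonempty Sᶜ with h | h
    · exact ⟨1, one_pos, by simp [h]⟩
    · obtain ⟨p₀, hp₀, hmin⟩ := hKcomp.exists_isMinOn h hcont2.continuousOn
      refine ⟨‖j p₀.1 - j p₀.2‖, ?_, fun p hp => hmin hp⟩
      have h2 : j p₀.1 ≠ j p₀.2 := fun hc => hKne_diag p₀ hp₀ (hjinj hc)
      exact norm_sub_pos_iff.mpr h2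
  set ε₀ : ℝ := min (t.inf' htne ε₁) (d / (2 * MG + 1)) with hε₀def
  have hε₀pos : 0 < ε₀ := by
    apply lt_min
    · exact (Finset.lt_inf'_iff htne).mpr (fun i _ => hε₁pos i)
    · positivity
  refine ⟨ε₀, hε₀pos, ?_⟩
  intro ε hε0 hεlt
  have hεi : ∀ i ∈ t, ε < ε₁ i := fun i hi =>
    lt_of_lt_of_le hεlt (le_trans (min_le_left _ _) (Finset.inf'_le _ hi))
  have hεd : ε * (2 * MG + 1) < d := by
    have h1 := lt_of_lt_of_le hεlt (min_le_right _ _)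
    exact (lt_div_iff₀ (by positivity)).mp h1
  have hpushval : ∀ a, cPushoff n j ζ ε a = j a + ε • Complex.I • g a := fun a => rfl
  have hIg : ∀ a, ‖Complex.I • g a‖ = ‖g a‖ := fun a => by
    rw [norm_smul, Complex.norm_I, one_mul]
  have hinj : Function.Injective (cPushoff n j ζ ε) := by
    intro p q hpq
    by_cases hpqS : (p, q) ∈ S
    · obtain ⟨i, hit, hm⟩ := Set.mem_iUnion₂.mp hpqS
      exact ((hloc i) ε hε0 (hεi i hit) p hm.1 q hm.2).1 hpq
    · exfalso
      have h1 : j p - j q = ε • (Complex.I • g q - Complex.I • g p) := by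
        rw [hpushval p, hpushval q] at hpq
        calc j p - j q
            = (j q + ε • Complex.I • g q) - ε • Complex.I • g p - j q := by rw [← hpq]; abel
          _ = ε • (Complex.I • g q - Complex.I • g p) := by rw [smul_sub]; abel
      have h2 : ‖j p - j q‖ ≤ ε * (2 * MG) := by
        rw [h1, norm_smul, Real.norm_eq_abs, abs_of_pos hε0]
        have h3 : ‖Complex.I • g q - Complex.I • g p‖ ≤ ‖g q‖ + ‖g p‖ := by
          refine le_trans (norm_sub_le _ _) ?_
          rw [hIg, hIg]
        have h4 : ‖Complex.I • g q - Complex.I • g p‖ ≤ 2 * MG := by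
          have := hMG p; have := hMG q; linarith
        exact mul_le_mul_of_nonneg_left h4 hε0.le
      have h3 := hd (p, q) hpqS
      have h5 : ε * (2 * MG) ≤ ε * (2 * MG + 1) := by nlinarith
      simp only at h3
      linarith
  have hemb : Topology.IsEmbedding (cPushoff n j ζ ε) :=
    ((hpushsm ε).continuous.isClosedEmbedding hinj).toIsEmbedding
  have hdinj : ∀ a, Function.Injective (mfderiv (𝓡 n) 𝓘(ℝ, Cn n) (cPushoff n j ζ ε) a) := by
    intro a
    obtain ⟨i, hit, hi⟩ := Set.mem_iUnion₂.mp (ht (Set.mem_univ a))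
    exact ((hloc i) ε hε0 (hεi i hit) a hi a hi).2.2
  refine ⟨⟨hpushsm ε, hinj, hemb, hdinj⟩, ?_⟩
  rw [Set.disjoint_left]
  rintro v ⟨p, rfl⟩ ⟨q, hq⟩
  by_cases hpqS : (p, q) ∈ S
  · obtain ⟨i, hit, hm⟩ := Set.mem_iUnion₂.mp hpqS
    exact ((hloc i) ε hε0 (hεi i hit) p hm.1 q hm.2).2.1 hq.symm
  · have h3 := hd (p, q) hpqS
    simp only at h3
    have h1 : j p - j q = -(ε • Complex.I • g p) := by
      rw [hq, hpushval p]; abel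
    have h2 : ‖j p - j q‖ ≤ ε * MG := by
      rw [h1, norm_neg, norm_smul, Real.norm_eq_abs, abs_of_pos hε0, hIg]
      exact mul_le_mul_of_nonneg_left (hMG p) hε0.le
    have h5 : ε * MG ≤ ε * (2 * MG + 1) := by nlinarith
    linarith
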